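/- arXiv:1303.1335 — 2 statements merged into one kernel-verified Lean document; each statement's English description precedes it below -/
import Mathlib

section
/- Every two-sided ideal of the free associative algebra k⟨X⟩ over a finite alphabet X, with respect to a fixed admissible order on the free monoid X*, admits a unique reduced Gröbner basis, and this reduced Gröbner basis generates the ideal. -/
namespace NC

/-- The free associative algebra on the alphabet `X`, with the words (the free
monoid on `X`) as a basis. -/
abbrev FA (k X : Type) [Field k] := MonoidAlgebra k (FreeMonoid X)

variable {k X : Type} [Field k]

/-- The monomial on a word `u` (with coefficient `1`). -/
noncomputable def mono (k : Type) [Field k] {X : Type} (u : FreeMonoid X) : FA k X :=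
  MonoidAlgebra.of k (FreeMonoid X) u

/-- `u` is a factor of `v`. -/
def IsFactor (u v : FreeMonoid X) : Prop := ∃ w₁ w₂ : FreeMonoid X, w₁ * u * w₂ = v

/-- The leading word of a polynomial (junk value `1` for the zero polynomial). -/
noncomputable def lw [LinearOrder (FreeMonoid X)] (f : FA k X) : FreeMonoid X :=
  f.coeff.support.max.unbotD 1

/-- The set of leading words of the nonzero members of `G`. -/
def lwSet [LinearOrder (FreeMonoid X)] (G : Set (FA k X)) : Set (FreeMonoid X) :=
  {u | ∃ f ∈ G, f ≠ 0 ∧ lw f = u}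

/-- The normal words modulo `G` : words having no factor among the leading words of `G`. -/
def nw [LinearOrder (FreeMonoid X)] (G : Set (FA k X)) : Set (FreeMonoid X) :=
  {u | ∀ v ∈ lwSet G, ¬ IsFactor v u}

/-- The two-sided ideal (as a `k`-submodule) generated by a set `S`. -/
noncomputable def ideal2 (k : Type) [Field k] {X : Type} (S : Set (FA k X)) : Submodule k (FA k X) :=
  Submodule.span k {x | ∃ a s b, s ∈ S ∧ x = a * s * b}

/-- A `k`-submodule of the free algebra which is a two-sided ideal. -/
def IsTwoSided (𝔞 : Submodule k (FA k X)) : Prop :=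
  ∀ a x : FA k X, x ∈ 𝔞 → a * x ∈ 𝔞 ∧ x * a ∈ 𝔞

/-- `G` is a Gröbner basis of the (two-sided) ideal `𝔞`. -/
def IsGrobner [LinearOrder (FreeMonoid X)] (𝔞 : Submodule k (FA k X))
    (G : Set (FA k X)) : Prop :=
  (∀ g ∈ G, g ∈ 𝔞) ∧ ∀ f ∈ 𝔞, f ≠ 0 → lw f ∉ nw G

/-- `G` is reduced: every member is monic and normal modulo the remaining members. -/
def IsReducedGB [LinearOrder (FreeMonoid X)] (G : Set (FA k X)) : Prop :=
  ∀ f ∈ G, f.coeff (lw f) = 1 ∧ ∀ u ∈ f.coeff.support, u ∈ nw (G \ {f})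

/-- The fixed linear order on words is admissible. -/
def IsAdmissible (X : Type) [LinearOrder (FreeMonoid X)] : Prop :=
  WellFoundedLT (FreeMonoid X) ∧ (∀ u : FreeMonoid X, u ≠ 1 → 1 < u) ∧
    ∀ u v w₁ w₂ : FreeMonoid X, u < v → w₁ * u * w₂ < w₁ * v * w₂

end NC

namespace NCAux
set_option linter.unusedSectionVars false
open NC

variable {k X : Type} [Field k] [LinearOrder (FreeMonoid X)]

/-! ### Finsupp / MonoidAlgebra basics -/

omit [LinearOrder (FreeMonoid X)] in
lemma mono_apply (u : FreeMonoid X) : NC.mono k u = MonoidAlgebra.single u (1 : k) :=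
  MonoidAlgebra.of_apply k (FreeMonoid X) u

omit [LinearOrder (FreeMonoid X)] in
lemma conj_inj (a b : FreeMonoid X) : Function.Injective (fun v => a * v * b) :=
  fun _ _ h => mul_left_cancel (mul_right_cancel h)

omit [LinearOrder (FreeMonoid X)] in
lemma mulmono_eq (a b : FreeMonoid X) (h : FA k X) :
    (NC.mono k a * h * NC.mono k b).coeff = Finsupp.mapDomain (fun v => a * v * b) h.coeff := by
  rw [mono_apply, mono_apply]
  induction h using MonoidAlgebra.induction_linear with
  | zero => simp
  | add f g hf hg =>
      rw [mul_add, add_mul, MonoidAlgebra.coeff_add, hf, hg, MonoidAlgebra.coeff_add,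
        Finsupp.mapDomain_add]
  | single v c =>
      rw [MonoidAlgebra.single_mul_single, MonoidAlgebra.single_mul_single,
        MonoidAlgebra.coeff_single, MonoidAlgebra.coeff_single, Finsupp.mapDomain_single]
      simp

lemma mulmono_support (a b : FreeMonoid X) (h : FA k X) :
    (NC.mono k a * h * NC.mono k b).coeff.support = h.coeff.support.image (fun v => a * v * b) := by
  rw [mulmono_eq]
  exact Finsupp.mapDomain_support_of_injective (conj_inj a b) h.coeff

omit [LinearOrder (FreeMonoid X)] in
lemma mulmono_coeff (a b : FreeMonoid X) (h : FA k X) (v : FreeMonoid X) :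
    (NC.mono k a * h * NC.mono k b).coeff (a * v * b) = h.coeff v := by
  rw [mulmono_eq]
  exact Finsupp.mapDomain_apply (conj_inj a b) h.coeff v

/-! ### leading word basics -/

lemma lw_mem_support {f : FA k X} (hf : f ≠ 0) : lw f ∈ f.coeff.support := by
  obtain ⟨m, hm⟩ := Finset.max_of_nonempty (Finsupp.support_nonempty_iff.2 (MonoidAlgebra.coeff_eq_zero.not.2 hf))
  have : lw f = m := by rw [NC.lw, hm]; rfl
  rw [this]; exact Finset.mem_of_max hm

lemma le_lw {f : FA k X} {x : FreeMonoid X} (hx : x ∈ f.coeff.support) : x ≤ lw f := by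
  have hf : f ≠ 0 := by rintro rfl; simp at hx
  obtain ⟨m, hm⟩ := Finset.max_of_nonempty (Finsupp.support_nonempty_iff.2 (MonoidAlgebra.coeff_eq_zero.not.2 hf))
  have h1 : lw f = m := by rw [NC.lw, hm]; rfl
  rw [h1]
  exact_mod_cast hm ▸ Finset.le_max hx

lemma lw_coeff_ne {f : FA k X} (hf : f ≠ 0) : f.coeff (lw f) ≠ 0 :=
  Finsupp.mem_support_iff.1 (lw_mem_support hf)

lemma lw_eq_of {f : FA k X} {u : FreeMonoid X} (hu : u ∈ f.coeff.support)
    (hmax : ∀ x ∈ f.coeff.support, x ≤ u) : lw f = u := by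
  have hf : f ≠ 0 := by rintro rfl; simp at hu
  exact le_antisymm (hmax _ (lw_mem_support hf)) (le_lw hu)

end NCAux

namespace NCAux
open NC
set_option linter.unusedSectionVars false

variable {k X : Type} [Field k] [LinearOrder (FreeMonoid X)]

lemma factor_refl (u : FreeMonoid X) : IsFactor u u := ⟨1, 1, by simp⟩

lemma factor_trans {u v w : FreeMonoid X} (h1 : IsFactor u v) (h2 : IsFactor v w) :
    IsFactor u w := by
  obtain ⟨a, b, rfl⟩ := h1
  obtain ⟨c, d, rfl⟩ := h2
  exact ⟨c * a, b * d, by simp [mul_assoc]⟩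

lemma factor_length_le {u v : FreeMonoid X} (h : IsFactor u v) :
    u.length ≤ v.length := by
  obtain ⟨a, b, rfl⟩ := h
  simp [FreeMonoid.length_mul]; omega

lemma factor_length_lt {u v : FreeMonoid X} (h : IsFactor u v) (hne : u ≠ v) :
    u.length < v.length := by
  obtain ⟨a, b, rfl⟩ := h
  rcases Nat.lt_or_ge u.length (a * u * b).length with h' | h'
  · exact h'
  · exfalso; apply hne
    simp only [FreeMonoid.length_mul] at h'
    have ha : a.length = 0 := by omega
    have hb : b.length = 0 := by omega
    have ha1 : a = 1 := FreeMonoid.length_eq_zero.1 ha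
    have hb1 : b = 1 := FreeMonoid.length_eq_zero.1 hb
    simp [ha1, hb1]

section adm
variable (hadm : NC.IsAdmissible X)
include hadm

lemma mul_le_mul' {u v : FreeMonoid X} (a b : FreeMonoid X) (h : u ≤ v) :
    a * u * b ≤ a * v * b := by
  rcases eq_or_lt_of_le h with rfl | h
  · exact le_rfl
  · exact le_of_lt (hadm.2.2 u v a b h)

lemma le_of_factor {u v : FreeMonoid X} (h : IsFactor u v) : u ≤ v := by
  obtain ⟨a, b, rfl⟩ := h
  have h1 : u ≤ u * b := by
    rcases eq_or_ne b 1 with rfl | hb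
    · simp
    · have := hadm.2.2 1 b u 1 (hadm.2.1 b hb)
      simpa using this.le
  have h2 : u * b ≤ a * (u * b) := by
    rcases eq_or_ne a 1 with rfl | ha
    · simp
    · have := hadm.2.2 1 a 1 (u * b) (hadm.2.1 a ha)
      simpa using this.le
  calc u ≤ u * b := h1
    _ ≤ a * (u * b) := h2
    _ = a * u * b := by rw [mul_assoc]

lemma lw_mulmono {f : FA k X} (hf : f ≠ 0) (a b : FreeMonoid X) :
    lw (NC.mono k a * f * NC.mono k b) = a * lw f * b := by
  apply lw_eq_of
  · rw [mulmono_support]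
    exact Finset.mem_image_of_mem _ (lw_mem_support hf)
  · intro x hx
    rw [mulmono_support] at hx
    obtain ⟨v, hv, rfl⟩ := Finset.mem_image.1 hx
    exact mul_le_mul' hadm a b (le_lw hv)

lemma mulmono_ne_zero {f : FA k X} (hf : f ≠ 0) (a b : FreeMonoid X) :
    NC.mono k a * f * NC.mono k b ≠ 0 := by
  intro h0
  have := mulmono_coeff a b f (lw f)
  rw [h0] at this
  exact lw_coeff_ne hf (by simpa using this.symm)

end adm
end NCAux

namespace NCAux
open NC
set_option linter.unusedSectionVars false

variable {k X : Type} [Field k] [LinearOrder (FreeMonoid X)]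

/-- Leading words of the ideal. -/
def LS (𝔞 : Submodule k (FA k X)) : Set (FreeMonoid X) := lwSet (𝔞 : Set (FA k X))

/-- The "obstructions": minimal leading words under the factor relation. -/
def OS (𝔞 : Submodule k (FA k X)) : Set (FreeMonoid X) :=
  {u | u ∈ LS 𝔞 ∧ ∀ v, IsFactor v u → v ≠ u → v ∉ LS 𝔞}

/-- The canonical reduced Gröbner basis. -/
def Gc (𝔞 : Submodule k (FA k X)) : Set (FA k X) :=
  {g | g ∈ 𝔞 ∧ g.coeff (lw g) = 1 ∧ lw g ∈ OS 𝔞 ∧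
    ∀ w ∈ g.coeff.support, w ≠ lw g → w ∈ nw (𝔞 : Set (FA k X))}

variable {𝔞 : Submodule k (FA k X)}

lemma mem_LS {f : FA k X} (hf : f ∈ 𝔞) (hf0 : f ≠ 0) : lw f ∈ LS 𝔞 :=
  ⟨f, hf, hf0, rfl⟩

lemma not_nw_of_LS {u : FreeMonoid X} (hu : u ∈ LS 𝔞) :
    u ∉ nw (𝔞 : Set (FA k X)) := fun hn => hn u hu (factor_refl u)

lemma zero_of_normal {f : FA k X} (hf : f ∈ 𝔞)
    (hn : ∀ w ∈ f.coeff.support, w ∈ nw (𝔞 : Set (FA k X))) : f = 0 := by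
  by_contra hf0
  exact not_nw_of_LS (mem_LS hf hf0) (hn _ (lw_mem_support hf0))

lemma exists_OS_factor {u : FreeMonoid X} (hu : u ∈ LS 𝔞) :
    ∃ v ∈ OS 𝔞, IsFactor v u := by
  have main : ∀ n : ℕ, ∀ u : FreeMonoid X, u.length = n → u ∈ LS 𝔞 →
      ∃ v ∈ OS 𝔞, IsFactor v u := by
    intro n
    induction n using Nat.strong_induction_on with
    | _ n IH =>
      intro u hlen hu
      by_cases hmin : ∀ v, IsFactor v u → v ≠ u → v ∉ LS 𝔞
      · exact ⟨u, ⟨hu, hmin⟩, factor_refl u⟩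
      · push_neg at hmin
        obtain ⟨v, hfac, hne, hvL⟩ := hmin
        obtain ⟨w, hwO, hwfac⟩ :=
          IH v.length (hlen ▸ factor_length_lt hfac hne) v rfl hvL
        exact ⟨w, hwO, factor_trans hwfac hfac⟩
  exact main u.length u rfl hu

section adm
variable (hadm : NC.IsAdmissible X) (h𝔞 : NC.IsTwoSided 𝔞)
include hadm h𝔞

/-- Reduction lemma: any nonzero member of the ideal can be replaced by one with
the same leading term whose non-leading words are all normal. -/
lemma reduce (f : FA k X) (hf : f ∈ 𝔞) (hf0 : f ≠ 0) :
    ∃ f' ∈ 𝔞, f' ≠ 0 ∧ lw f' = lw f ∧ f'.coeff (lw f) = f.coeff (lw f) ∧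
      ∀ w ∈ f'.coeff.support, w ≠ lw f → w ∈ nw (𝔞 : Set (FA k X)) := by
  classical
  have key : ∀ w : FreeMonoid X, ∀ f : FA k X, f ∈ 𝔞 → f ≠ 0 →
      (∀ x ∈ f.coeff.support, x ≠ lw f → x ∉ nw (𝔞 : Set (FA k X)) → x < w) →
      ∃ f' ∈ 𝔞, f' ≠ 0 ∧ lw f' = lw f ∧ f'.coeff (lw f) = f.coeff (lw f) ∧
        ∀ w ∈ f'.coeff.support, w ≠ lw f → w ∈ nw (𝔞 : Set (FA k X)) := by
    intro w
    induction w using hadm.1.wf.induction with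
    | _ w IH =>
      intro f hf hf0 hbound
      by_cases hall : ∀ x ∈ f.coeff.support, x ≠ lw f → x ∈ nw (𝔞 : Set (FA k X))
      · exact ⟨f, hf, hf0, rfl, rfl, hall⟩
      · push_neg at hall
        set bad : Finset (FreeMonoid X) :=
          f.coeff.support.filter (fun x => x ≠ lw f ∧ x ∉ nw (𝔞 : Set (FA k X))) with hbad
        have hbad_ne : bad.Nonempty := by
          obtain ⟨x, hx1, hx2, hx3⟩ := hall
          exact ⟨x, Finset.mem_filter.2 ⟨hx1, hx2, hx3⟩⟩
        set m := bad.max' hbad_ne with hm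
        have hm_mem := Finset.max'_mem bad hbad_ne
        rw [Finset.mem_filter] at hm_mem
        obtain ⟨hm_supp, hm_ne, hm_nn⟩ := hm_mem
        have hm_lt_w : m < w := hbound m hm_supp hm_ne hm_nn
        have hm_lt_lw : m < lw f := lt_of_le_of_ne (le_lw hm_supp) hm_ne
        -- m has a factor which is a leading word of the ideal
        rw [NC.nw, Set.mem_setOf_eq] at hm_nn
        push_neg at hm_nn
        obtain ⟨v, hvL, a, b, hab⟩ := hm_nn
        obtain ⟨h, hh𝔞, hh0, rfl⟩ := hvL
        set q := NC.mono k a * h * NC.mono k b with hq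
        have hq𝔞 : q ∈ 𝔞 := (h𝔞 (NC.mono k b) _ (h𝔞 (NC.mono k a) h hh𝔞).1).2
        have hlwq : lw q = m := by rw [hq, lw_mulmono hadm hh0, hab]
        have hqm : q.coeff m = h.coeff (lw h) := by rw [hm, ← hab]; exact mulmono_coeff a b h (lw h)
        set c := f.coeff m / h.coeff (lw h) with hc
        set r : FA k X := f - c • q with hr
        have hr𝔞 : r ∈ 𝔞 := Submodule.sub_mem _ hf (Submodule.smul_mem _ _ hq𝔞)
        have hr_apply : ∀ y, r.coeff y = f.coeff y - c * q.coeff y := by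
          intro y; rw [hr, MonoidAlgebra.coeff_sub, Finsupp.sub_apply, MonoidAlgebra.coeff_smul,
              Finsupp.smul_apply, smul_eq_mul]
        have hq_le : ∀ y ∈ q.coeff.support, y ≤ m := fun y hy => hlwq ▸ le_lw hy
        have hr_lwf : r.coeff (lw f) = f.coeff (lw f) := by
          have : q.coeff (lw f) = 0 := by
            rw [← Finsupp.notMem_support_iff]
            intro hmem
            exact absurd (hq_le _ hmem) (not_le.2 hm_lt_lw)
          rw [hr_apply, this, mul_zero, sub_zero]
        have hr_m : r.coeff m = 0 := by
          rw [hr_apply, hqm, hc, div_mul_cancel₀ _ (lw_coeff_ne hh0), sub_self]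
        have hr0 : r ≠ 0 := by
          intro h0
          rw [h0] at hr_lwf
          exact lw_coeff_ne hf0 (by simpa using hr_lwf.symm)
        have hr_supp : ∀ x ∈ r.coeff.support, x ∈ f.coeff.support ∨ x ∈ q.coeff.support := by
          intro x hx
          have hsub := Finsupp.support_sub (f := f.coeff) (g := (c • q).coeff) (hr ▸ hx)
          rcases Finset.mem_union.1 hsub with h1 | h1
          · exact Or.inl h1
          · exact Or.inr (Finsupp.support_smul (h1 : x ∈ (c • q.coeff).support))
        have hr_lw : lw r = lw f := by
          apply lw_eq_of
          · rw [Finsupp.mem_support_iff, hr_lwf]; exact lw_coeff_ne hf0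
          · intro x hx
            rcases hr_supp x hx with h1 | h1
            · exact le_lw h1
            · exact le_trans (hq_le x h1) hm_lt_lw.le
        have hbound' : ∀ x ∈ r.coeff.support, x ≠ lw r →
            x ∉ nw (𝔞 : Set (FA k X)) → x < m := by
          intro x hx hxne hxnn
          have hxm : x ≠ m := by
            intro h1; rw [Finsupp.mem_support_iff, h1, hr_m] at hx; exact hx rfl
          rcases hr_supp x hx with h1 | h1
          · have : x ∈ bad := Finset.mem_filter.2 ⟨h1, hr_lw ▸ hxne, hxnn⟩
            exact lt_of_le_of_ne (Finset.le_max' bad x this) hxm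
          · exact lt_of_le_of_ne (hq_le x h1) hxm
        obtain ⟨f', hf'𝔞, hf'0, hlw', hcoeff', hnorm'⟩ := IH m hm_lt_w r hr𝔞 hr0 hbound'
        refine ⟨f', hf'𝔞, hf'0, ?_, ?_, ?_⟩
        · rw [hlw', hr_lw]
        · rw [← hr_lw, hcoeff', hr_lw, hr_lwf]
        · intro y hy hyne
          exact hnorm' y hy (by rw [hr_lw]; exact hyne)
  apply key (lw f)
  · exact hf
  · exact hf0
  · intro x hx hxne _
    exact lt_of_le_of_ne (le_lw hx) hxne

lemma exists_Gc {u : FreeMonoid X} (hu : u ∈ OS 𝔞) : ∃ g ∈ Gc 𝔞, lw g = u := by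
  obtain ⟨f, hf𝔞, hf0, rfl⟩ := hu.1
  obtain ⟨f', hf'𝔞, hf'0, hlw', hcoeff', hnorm'⟩ := reduce hadm h𝔞 f hf𝔞 hf0
  have hc0 : f'.coeff (lw f) ≠ 0 := by rw [hcoeff']; exact lw_coeff_ne hf0
  set g : FA k X := (f'.coeff (lw f))⁻¹ • f' with hg
  have hginv : (f'.coeff (lw f))⁻¹ ≠ 0 := inv_ne_zero hc0
  have hgsupp : g.coeff.support = f'.coeff.support := by
    rw [hg, MonoidAlgebra.coeff_smul]; exact Finsupp.support_smul_eq hginv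
  have hglw : lw g = lw f := by
    rw [NC.lw, hgsupp, ← NC.lw, hlw']
  have hg_apply : ∀ y, g.coeff y = (f'.coeff (lw f))⁻¹ * f'.coeff y := by
    intro y; rw [hg, MonoidAlgebra.coeff_smul, Finsupp.smul_apply, smul_eq_mul]
  refine ⟨g, ⟨Submodule.smul_mem _ _ hf'𝔞, ?_, ?_, ?_⟩, hglw⟩
  · rw [hglw, hg_apply, inv_mul_cancel₀ hc0]
  · rw [hglw]; exact hu
  · intro w hw hwne
    rw [hgsupp] at hw
    exact hnorm' w hw (by rw [hglw] at hwne; exact hwne)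

/-- Uniqueness of the fully reduced representative of a given leading word. -/
lemma mem_unique {g₁ g₂ : FA k X} (h₁ : g₁ ∈ 𝔞) (h₂ : g₂ ∈ 𝔞)
    (hlw : lw g₁ = lw g₂) (hm₁ : g₁.coeff (lw g₁) = 1) (hm₂ : g₂.coeff (lw g₂) = 1)
    (hn₁ : ∀ w ∈ g₁.coeff.support, w ≠ lw g₁ → w ∈ nw (𝔞 : Set (FA k X)))
    (hn₂ : ∀ w ∈ g₂.coeff.support, w ≠ lw g₂ → w ∈ nw (𝔞 : Set (FA k X))) : g₁ = g₂ := by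
  by_contra hne
  have hd0 : g₁ - g₂ ≠ 0 := sub_ne_zero.2 hne
  apply hd0
  apply zero_of_normal (Submodule.sub_mem _ h₁ h₂)
  intro w hw
  have hwne : w ≠ lw g₁ := by
    intro h1
    rw [Finsupp.mem_support_iff, h1, MonoidAlgebra.coeff_sub, Finsupp.sub_apply, hm₁, hlw, hm₂] at hw
    exact hw (sub_self 1)
  rcases Finset.mem_union.1 (Finsupp.support_sub (f := g₁.coeff) (g := g₂.coeff) hw) with h1 | h1
  · exact hn₁ w h1 hwne
  · exact hn₂ w h1 (hlw ▸ hwne)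

end adm
end NCAux

namespace NCAux
open NC
set_option linter.unusedSectionVars false

variable {k X : Type} [Field k] [LinearOrder (FreeMonoid X)]
variable {𝔞 : Submodule k (FA k X)}

lemma Gc_ne_zero {g : FA k X} (hg : g ∈ Gc 𝔞) : g ≠ 0 := by
  intro h0
  rw [h0] at hg
  have := hg.2.1
  simp at this

lemma ne_zero_of_monic {g : FA k X} (hm : g.coeff (lw g) = 1) : g ≠ 0 := by
  intro h0; rw [h0] at hm; simp at hm

section adm
variable (hadm : NC.IsAdmissible X) (h𝔞 : NC.IsTwoSided 𝔞)
include hadm h𝔞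

lemma Gc_isGrobner : IsGrobner 𝔞 (Gc 𝔞) := by
  refine ⟨fun g hg => hg.1, fun f hf hf0 hnw => ?_⟩
  obtain ⟨v, hvO, hvfac⟩ := exists_OS_factor (mem_LS hf hf0)
  obtain ⟨g, hgGc, hglw⟩ := exists_Gc hadm h𝔞 hvO
  exact hnw v ⟨g, hgGc, Gc_ne_zero hgGc, hglw⟩ hvfac

lemma Gc_isReduced : IsReducedGB (Gc 𝔞) := by
  intro g hg
  refine ⟨hg.2.1, fun u hu => ?_⟩
  intro v hv hfac
  obtain ⟨g', hg', hg'0, rfl⟩ := hv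
  have hg'Gc : g' ∈ Gc 𝔞 := hg'.1
  have hg'L : lw g' ∈ LS 𝔞 := mem_LS hg'Gc.1 hg'0
  by_cases hune : u = lw g
  · subst hune
    -- lw g' is a factor of lw g ∈ OS
    rcases eq_or_ne (lw g') (lw g) with heq | hne2
    · -- same leading word forces g' = g
      apply hg'.2
      rw [Set.mem_singleton_iff]
      exact mem_unique hadm h𝔞 hg'Gc.1 hg.1 heq hg'Gc.2.1 hg.2.1
        (fun w hw hwne => hg'Gc.2.2.2 w hw hwne)
        (fun w hw hwne => hg.2.2.2 w hw hwne)
    · exact hg.2.2.1.2 (lw g') hfac hne2 hg'L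
  · exact hg.2.2.2 u hu hune (lw g') hg'L hfac

/-- Any reduced Gröbner basis coincides with the canonical one. -/
lemma eq_Gc (G : Set (FA k X)) (hGr : IsGrobner 𝔞 G) (hRed : IsReducedGB G) :
    G = Gc 𝔞 := by
  have hG0 : ∀ g ∈ G, g ≠ 0 := fun g hg => ne_zero_of_monic (hRed g hg).1
  have hGsub : G ⊆ Gc 𝔞 := by
    intro g hg
    have hg𝔞 : g ∈ 𝔞 := hGr.1 g hg
    have hg0 : g ≠ 0 := hG0 g hg
    have hmonic := (hRed g hg).1
    have hlwnorm : lw g ∈ nw (G \ {g}) := (hRed g hg).2 (lw g) (lw_mem_support hg0)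
    -- (i) every non-leading word of g is normal mod the ideal
    have hnorm : ∀ w ∈ g.coeff.support, w ≠ lw g → w ∈ nw (𝔞 : Set (FA k X)) := by
      intro w hw hwne v hvL hfac
      obtain ⟨f, hf𝔞, hf0, rfl⟩ := hvL
      have hnotnw : lw f ∉ nw G := hGr.2 f hf𝔞 hf0
      rw [NC.nw, Set.mem_setOf_eq] at hnotnw
      push_neg at hnotnw
      obtain ⟨v', hv'G, hv'fac⟩ := hnotnw
      obtain ⟨g', hg'G, hg'0, rfl⟩ := hv'G
      have hfacw : IsFactor (lw g') w := factor_trans hv'fac hfac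
      rcases eq_or_ne g' g with rfl | hne
      · have h1 : lw g' ≤ w := le_of_factor hadm hfacw
        have h2 : w < lw g' := lt_of_le_of_ne (le_lw hw) hwne
        exact absurd h1 (not_le.2 h2)
      · exact (hRed g hg).2 w hw (lw g') ⟨g', ⟨hg'G, hne⟩, hg'0, rfl⟩ hfacw
    -- (ii) lw g is an obstruction
    have hO : lw g ∈ OS 𝔞 := by
      refine ⟨mem_LS hg𝔞 hg0, fun v hfac hne hvL => ?_⟩
      obtain ⟨f, hf𝔞, hf0, rfl⟩ := hvL
      have hnotnw : lw f ∉ nw G := hGr.2 f hf𝔞 hf0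
      rw [NC.nw, Set.mem_setOf_eq] at hnotnw
      push_neg at hnotnw
      obtain ⟨v', hv'G, hv'fac⟩ := hnotnw
      obtain ⟨g', hg'G, hg'0, rfl⟩ := hv'G
      have hfaclw : IsFactor (lw g') (lw g) := factor_trans hv'fac hfac
      have hlen : (lw g').length < (lw g).length :=
        lt_of_le_of_lt (factor_length_le hv'fac) (factor_length_lt hfac hne)
      have hne' : g' ≠ g := by
        intro h1; rw [h1] at hlen; exact lt_irrefl _ hlen
      exact hlwnorm (lw g') ⟨g', ⟨hg'G, hne'⟩, hg'0, rfl⟩ hfaclw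
    exact ⟨hg𝔞, hmonic, hO, hnorm⟩
  apply Set.Subset.antisymm hGsub
  intro g hg
  have hu : lw g ∈ OS 𝔞 := hg.2.2.1
  obtain ⟨f, hf𝔞, hf0, hlwf⟩ := hu.1
  have hnotnw : lw f ∉ nw G := hGr.2 f hf𝔞 hf0
  rw [NC.nw, Set.mem_setOf_eq] at hnotnw
  push_neg at hnotnw
  obtain ⟨v', hv'G, hv'fac⟩ := hnotnw
  obtain ⟨g', hg'G, hg'0, rfl⟩ := hv'G
  rw [hlwf] at hv'fac
  have hg'Gc : g' ∈ Gc 𝔞 := hGsub hg'G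
  have heq : lw g' = lw g := by
    by_contra hne
    exact hu.2 (lw g') hv'fac hne (mem_LS (hGr.1 g' hg'G) hg'0)
  have : g = g' := mem_unique hadm h𝔞 hg.1 hg'Gc.1 heq.symm hg.2.1 hg'Gc.2.1
    (fun w hw hwne => hg.2.2.2 w hw hwne)
    (fun w hw hwne => hg'Gc.2.2.2 w hw hwne)
  rw [this]; exact hg'G

/-- A reduced Gröbner basis generates the ideal. -/
lemma gen_of_grobner (G : Set (FA k X)) (hGr : IsGrobner 𝔞 G)
    (hRed : IsReducedGB G) : ideal2 k G = 𝔞 := by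
  have hle : ideal2 k G ≤ 𝔞 := by
    rw [ideal2, Submodule.span_le]
    rintro x ⟨a, s, b, hs, rfl⟩
    exact (h𝔞 b _ (h𝔞 a s (hGr.1 s hs)).1).2
  refine le_antisymm hle ?_
  intro f hf
  have key : ∀ w : FreeMonoid X, ∀ f : FA k X, f ∈ 𝔞 → f ≠ 0 → lw f = w →
      f ∈ ideal2 k G := by
    intro w
    induction w using hadm.1.wf.induction with
    | _ w IH =>
      rintro f hf hf0 rfl
      have hnotnw : lw f ∉ nw G := hGr.2 f hf hf0
      rw [NC.nw, Set.mem_setOf_eq] at hnotnw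
      push_neg at hnotnw
      obtain ⟨v, hvG, hvfac⟩ := hnotnw
      obtain ⟨g, hgG, hg0, rfl⟩ := hvG
      obtain ⟨a, b, hab⟩ := hvfac
      set q := NC.mono k a * g * NC.mono k b with hq
      have hqI : q ∈ ideal2 k G :=
        Submodule.subset_span ⟨NC.mono k a, g, NC.mono k b, hgG, rfl⟩
      have hq𝔞 : q ∈ 𝔞 := hle hqI
      have hlwq : lw q = lw f := by rw [hq, lw_mulmono hadm hg0, hab]
      have hqlwf : q.coeff (lw f) = 1 := by
        rw [← hab, hq, mulmono_coeff]; exact (hRed g hgG).1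
      set r : FA k X := f - f.coeff (lw f) • q with hr
      have hr𝔞 : r ∈ 𝔞 := Submodule.sub_mem _ hf (Submodule.smul_mem _ _ hq𝔞)
      have hr_lwf : r.coeff (lw f) = 0 := by
        rw [hr, MonoidAlgebra.coeff_sub, Finsupp.sub_apply, MonoidAlgebra.coeff_smul,
          Finsupp.smul_apply, smul_eq_mul, hqlwf,
          mul_one, sub_self]
      have hr_supp : ∀ x ∈ r.coeff.support, x < lw f := by
        intro x hx
        have hxne : x ≠ lw f := by
          intro h1; rw [Finsupp.mem_support_iff, h1, hr_lwf] at hx; exact hx rfl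
        have hsub := Finsupp.support_sub (f := f.coeff) (g := (f.coeff (lw f) • q).coeff) (hr ▸ hx)
        rcases Finset.mem_union.1 hsub with h1 | h1
        · exact lt_of_le_of_ne (le_lw h1) hxne
        · exact lt_of_le_of_ne (hlwq ▸ le_lw (Finsupp.support_smul (h1 : x ∈ (f.coeff (lw f) • q.coeff).support))) hxne
      have hfeq : f = r + f.coeff (lw f) • q := by rw [hr]; abel
      by_cases hr0 : r = 0
      · rw [hfeq, hr0, zero_add]
        exact Submodule.smul_mem _ _ hqI
      · have hlt : lw r < lw f := hr_supp _ (lw_mem_support hr0)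
        have hrI : r ∈ ideal2 k G := IH (lw r) hlt r hr𝔞 hr0 rfl
        rw [hfeq]
        exact Submodule.add_mem _ hrI (Submodule.smul_mem _ _ hqI)
  by_cases hf0 : f = 0
  · rw [hf0]; exact Submodule.zero_mem _
  · exact key (lw f) f hf hf0 rfl

end adm
end NCAux

/-- Every two-sided ideal of the free algebra `k⟨X⟩` over a finite
alphabet, with respect to a fixed admissible order on the words, admits a unique
reduced Gröbner basis, and this reduced Gröbner basis generates the ideal. -/
theorem stmt_1 (k X : Type) [Field k] [Finite X] [LinearOrder (FreeMonoid X)]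
    (hadm : NC.IsAdmissible X)
    (𝔞 : Submodule k (NC.FA k X)) (h𝔞 : NC.IsTwoSided 𝔞) :
    (∃! G : Set (NC.FA k X), NC.IsGrobner 𝔞 G ∧ NC.IsReducedGB G) ∧
    ∀ G : Set (NC.FA k X), NC.IsGrobner 𝔞 G → NC.IsReducedGB G →
      NC.ideal2 k G = 𝔞 := by
  constructor
  · refine ⟨NCAux.Gc 𝔞, ⟨NCAux.Gc_isGrobner hadm h𝔞, NCAux.Gc_isReduced hadm h𝔞⟩, ?_⟩
    rintro G ⟨hGr, hRed⟩
    exact NCAux.eq_Gc hadm h𝔞 G hGr hRed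
  · intro G hGr hRed
    exact NCAux.gen_of_grobner hadm h𝔞 G hGr hRed
end

section
/- Let k⟨X⟩ be graded by a set map e: X → N^s∖{0}, let 𝔞 be a homogeneous ideal, A = k⟨X⟩/𝔞, G ⊆ 𝔞 a homogeneous set, and R = k⟨X⟩/(lw(G)). Then for any α ∈ N^s, the set of words of degree β that are normal modulo G forms a k-basis of A_β for every β ≤ α if and only if dim_k A_β = dim_k R_β for every β ≤ α. -/
namespace NC2
open NC
variable {k X : Type} [Field k]

/-- The (multi)degree of a word, for the grading determined by `e` on the letters. -/
def mdeg {σ : Type} [AddCommMonoid σ] (e : X → σ) (w : FreeMonoid X) : σ :=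
  ((FreeMonoid.toList w).map e).sum

/-- `f` is homogeneous of degree `α`. -/
def IsHomog {σ : Type} [AddCommMonoid σ] (e : X → σ) (α : σ) (f : NC.FA k X) : Prop :=
  ∀ u ∈ f.coeff.support, mdeg e u = α

open Classical in
/-- The degree-`α` homogeneous component of `f`. -/
noncomputable def homComp {σ : Type} [AddCommMonoid σ] (e : X → σ) (α : σ) (f : NC.FA k X) :
    NC.FA k X :=
  MonoidAlgebra.ofCoeff (Finsupp.filter (fun u => mdeg e u = α) f.coeff)

/-- A homogeneous (two-sided) ideal. -/
def IsHomogIdeal {σ : Type} [AddCommMonoid σ] (e : X → σ) (𝔞 : Submodule k (NC.FA k X)) : Prop :=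
  NC.IsTwoSided 𝔞 ∧ ∀ f ∈ 𝔞, ∀ α : σ, homComp e α f ∈ 𝔞

/-- Polynomials supported on a given set of words. -/
noncomputable def wsupported (k : Type) [Field k] {X : Type} (S : Set (FreeMonoid X)) :
    Submodule k (NC.FA k X) :=
  MonoidAlgebra.supported k k S

/-- Dimension of the image, in the quotient by `𝔞`, of the span of the words in `S`. -/
noncomputable def hilbS (𝔞 : Submodule k (NC.FA k X)) (S : Set (FreeMonoid X)) : ℕ :=
  Module.finrank k ↥((wsupported k S).map 𝔞.mkQ)

/-- The multigraded Hilbert function of the quotient algebra `k⟨X⟩/𝔞`. -/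
noncomputable def hilb {σ : Type} [AddCommMonoid σ] (e : X → σ) (𝔞 : Submodule k (NC.FA k X))
    (α : σ) : ℕ :=
  hilbS 𝔞 {u | mdeg e u = α}

/-- The monomial ideal on a set of words. -/
noncomputable def monIdeal (k : Type) [Field k] {X : Type} (V : Set (FreeMonoid X)) :
    Submodule k (NC.FA k X) :=
  NC.ideal2 k ((fun u => NC.mono k u) '' V)

/-- Partial sums of a Hilbert function. -/
def psum (H : ℕ → ℕ) (n : ℕ) : ℕ := ∑ i ∈ Finset.range (n + 1), H i

/-- The growth function is bounded by a polynomial of degree `d`. -/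
def PolyBoundedBy (H : ℕ → ℕ) (d : ℕ) : Prop := ∃ C : ℕ, ∀ n, psum H n ≤ C * (n + 1) ^ d

/-- Polynomial growth (of some degree). -/
def PolyGrowth (H : ℕ → ℕ) : Prop := ∃ d, PolyBoundedBy H d

/-- Polynomial growth of degree exactly `d`. -/
def PolyGrowthDeg (H : ℕ → ℕ) (d : ℕ) : Prop :=
  ∃ C : ℕ, 0 < C ∧ ∀ n, psum H n ≤ C * (n + 1) ^ d ∧ (n + 1) ^ d ≤ C * psum H n

/-- Gelfand-Kirillov dimension of a graded algebra with Hilbert function `H`, as an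
extended natural number. -/
noncomputable def gkdimH (H : ℕ → ℕ) : ℕ∞ :=
  sInf ((fun d : ℕ => (d : ℕ∞)) '' {d | PolyBoundedBy H d})

end NC2

namespace Aux
open NC NC2
variable {k X : Type} [Field k]

lemma mono_eq_single (u : FreeMonoid X) : NC.mono k u = MonoidAlgebra.single u (1:k) := rfl

lemma conj_inj (w₁ w₂ : FreeMonoid X) :
    Function.Injective (fun u : FreeMonoid X => w₁ * u * w₂) := by
  intro a b h
  simp only at h
  exact mul_left_cancel (mul_right_cancel h)

lemma mono_mul_mul (w₁ w₂ : FreeMonoid X) (g : NC.FA k X) :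
    NC.mono k w₁ * g * NC.mono k w₂ = MonoidAlgebra.mapDomain (fun u => w₁ * u * w₂) g := by
  induction g using MonoidAlgebra.induction_linear with
  | zero => simp [MonoidAlgebra.mapDomain_zero]
  | add f g hf hg => rw [mul_add, add_mul, MonoidAlgebra.mapDomain_add, hf, hg]
  | single u c =>
      rw [mono_eq_single, mono_eq_single]
      show MonoidAlgebra.single w₁ 1 * MonoidAlgebra.single u c * MonoidAlgebra.single w₂ 1 = _
      rw [MonoidAlgebra.single_mul_single, MonoidAlgebra.single_mul_single,
        MonoidAlgebra.mapDomain_single]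
      simp

lemma mdeg_mul {σ : Type} [AddCommMonoid σ] (e : X → σ) (u v : FreeMonoid X) :
    NC2.mdeg e (u * v) = NC2.mdeg e u + NC2.mdeg e v := by
  simp [NC2.mdeg, FreeMonoid.toList_mul]

lemma isTwoSided_ideal2 (S : Set (NC.FA k X)) : NC.IsTwoSided (NC.ideal2 k S) := by
  intro a x hx
  constructor
  · induction hx using Submodule.span_induction with
    | mem y hy =>
        obtain ⟨p, s, q, hs, rfl⟩ := hy
        exact Submodule.subset_span ⟨a * p, s, q, hs, by simp [mul_assoc]⟩
    | zero => simp
    | add y z _ _ ihy ihz => rw [mul_add]; exact add_mem ihy ihz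
    | smul c y _ ihy => rw [mul_smul_comm]; exact Submodule.smul_mem _ _ ihy
  · induction hx using Submodule.span_induction with
    | mem y hy =>
        obtain ⟨p, s, q, hs, rfl⟩ := hy
        exact Submodule.subset_span ⟨p, s, q * a, hs, by simp [mul_assoc]⟩
    | zero => simp
    | add y z _ _ ihy ihz => rw [add_mul]; exact add_mem ihy ihz
    | smul c y _ ihy => rw [smul_mul_assoc]; exact Submodule.smul_mem _ _ ihy

section Ord
variable [LinearOrder (FreeMonoid X)]

lemma lw_mem_support {f : NC.FA k X} (hf : f ≠ 0) : NC.lw f ∈ f.coeff.support := by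
  obtain ⟨u, hu⟩ := Finsupp.support_nonempty_iff.mpr (mt MonoidAlgebra.coeff_eq_zero.mp hf)
  obtain ⟨m, hm⟩ := Finset.max_of_mem hu
  have h : NC.lw f = m := by rw [NC.lw, hm, WithBot.unbotD_coe]
  rw [h]; exact Finset.mem_of_max hm

lemma le_lw {f : NC.FA k X} {u} (hu : u ∈ f.coeff.support) : u ≤ NC.lw f := by
  obtain ⟨m, hm⟩ := Finset.max_of_mem hu
  have h1 : (u : WithBot (FreeMonoid X)) ≤ f.coeff.support.max := Finset.le_max hu
  rw [hm] at h1
  rw [NC.lw, hm, WithBot.unbotD_coe]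
  exact WithBot.coe_le_coe.mp h1

lemma lw_mono (v : FreeMonoid X) : NC.lw (NC.mono k v) = v := by
  rw [NC.lw, mono_eq_single, MonoidAlgebra.coeff_single, Finsupp.support_single_ne_zero _ (one_ne_zero (α := k)),
    Finset.max_singleton, WithBot.unbotD_coe]

open Pointwise in
lemma monIdeal_le (G : Set (NC.FA k X)) :
    NC2.monIdeal k (NC.lwSet G) ≤ NC2.wsupported k {u | u ∈ NC.nw G}ᶜ := by
  classical
  rw [NC2.monIdeal, NC.ideal2, Submodule.span_le]
  rintro x ⟨a, s, b, ⟨v, hv, rfl⟩, rfl⟩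
  rw [SetLike.mem_coe, NC2.wsupported, MonoidAlgebra.mem_supported]
  intro y hy
  have h1 := MonoidAlgebra.support_coeff_mul_subset (a * NC.mono k v) b hy
  rw [Finset.mem_mul] at h1
  obtain ⟨p, hp, q, hq, rfl⟩ := h1
  have h2 := MonoidAlgebra.support_coeff_mul_subset a (NC.mono k v) hp
  rw [Finset.mem_mul] at h2
  obtain ⟨p', hp', r, hr, rfl⟩ := h2
  rw [mono_eq_single, MonoidAlgebra.coeff_single, Finsupp.support_single_ne_zero _ (one_ne_zero (α := k)),
    Finset.mem_singleton] at hr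
  subst hr
  intro hnorm
  exact hnorm r hv ⟨p', q, rfl⟩
end Ord
end Aux

namespace Aux
open NC NC2
variable {k X : Type} [Field k] [LinearOrder (FreeMonoid X)]

lemma span_normal (hadm : NC.IsAdmissible X) {s : ℕ} (e : X → Fin s → ℕ)
    (G : Set (NC.FA k X)) (𝔟 : Submodule k (NC.FA k X)) (h2 : NC.IsTwoSided 𝔟)
    (hrep : ∀ v ∈ NC.lwSet G, ∃ f ∈ 𝔟, f ≠ 0 ∧ NC.lw f = v ∧ NC2.IsHomog e (NC2.mdeg e v) f)
    (β : Fin s → ℕ) :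
    Submodule.span k
        (Set.range (fun u : {u : FreeMonoid X // u ∈ NC.nw G ∧ NC2.mdeg e u = β} =>
          𝔟.mkQ (NC.mono k u.1))) =
      (NC2.wsupported k {u | NC2.mdeg e u = β}).map 𝔟.mkQ := by
  classical
  set S := Submodule.span k
      (Set.range (fun u : {u : FreeMonoid X // u ∈ NC.nw G ∧ NC2.mdeg e u = β} =>
        𝔟.mkQ (NC.mono k u.1))) with hS
  have key : ∀ u : FreeMonoid X, NC2.mdeg e u = β → 𝔟.mkQ (NC.mono k u) ∈ S := by
    intro u
    refine hadm.1.wf.induction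
      (C := fun u => NC2.mdeg e u = β → 𝔟.mkQ (NC.mono k u) ∈ S) u ?_
    intro x IH hx
    by_cases hnorm : x ∈ NC.nw G
    · exact Submodule.subset_span ⟨⟨x, hnorm, hx⟩, rfl⟩
    · rw [NC.nw, Set.mem_setOf_eq] at hnorm
      push_neg at hnorm
      obtain ⟨v, hv, w₁, w₂, hw⟩ := hnorm
      obtain ⟨f, hf𝔟, hf0, hlw, hhom⟩ := hrep v hv
      set c := f.coeff v with hcdef
      have hcne : c ≠ 0 := by
        rw [hcdef, ← hlw]
        exact Finsupp.mem_support_iff.mp (lw_mem_support hf0)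
      set p : NC.FA k X := MonoidAlgebra.mapDomain (fun y => w₁ * y * w₂) f with hpdef
      have hp𝔟 : p ∈ 𝔟 := by
        rw [hpdef, ← mono_mul_mul]
        exact (h2 (NC.mono k w₂) _ (h2 (NC.mono k w₁) f hf𝔟).1).2
      set q : NC.FA k X := NC.mono k x - c⁻¹ • p with hqdef
      have hsupp : ∀ y ∈ q.coeff.support, y < x ∧ NC2.mdeg e y = β := by
        intro y hy
        have hy0 : q.coeff y ≠ 0 := Finsupp.mem_support_iff.mp hy
        by_cases hyx : y = x
        · exfalso
          apply hy0
          subst hyx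
          have hpx : p.coeff y = c := by
            rw [← hw, hpdef]
            exact Finsupp.mapDomain_apply (conj_inj w₁ w₂) f.coeff v
          rw [hqdef]
          rw [MonoidAlgebra.coeff_sub, Finsupp.sub_apply, MonoidAlgebra.coeff_smul_apply, hpx, mono_eq_single,
            MonoidAlgebra.coeff_single, Finsupp.single_eq_same, smul_eq_mul, inv_mul_cancel₀ hcne, sub_self]
        · have hpy : p.coeff y ≠ 0 := by
            intro h0
            apply hy0
            rw [hqdef, MonoidAlgebra.coeff_sub, Finsupp.sub_apply, MonoidAlgebra.coeff_smul_apply, h0, smul_zero, mono_eq_single,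
              MonoidAlgebra.coeff_single, Finsupp.single_eq_of_ne hyx, sub_zero]
          obtain ⟨z, hz, hzy⟩ := Finset.mem_image.mp
            (Finsupp.mapDomain_support (Finsupp.mem_support_iff.mpr hpy))
          have hzle : z ≤ v := hlw ▸ le_lw hz
          have hzne : z ≠ v := by
            intro h; exact hyx (by rw [← hzy, h, hw])
          have hzlt : z < v := lt_of_le_of_ne hzle hzne
          constructor
          · rw [← hzy, ← hw]; exact hadm.2.2 z v w₁ w₂ hzlt
          · have h1 : NC2.mdeg e z = NC2.mdeg e v := hhom z hz
            rw [← hzy, mdeg_mul, mdeg_mul, h1, ← mdeg_mul, ← mdeg_mul, hw, hx]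
      have hmkq : 𝔟.mkQ (NC.mono k x) = 𝔟.mkQ q := by
        rw [hqdef, map_sub, map_smul,
          show 𝔟.mkQ p = 0 from (Submodule.Quotient.mk_eq_zero 𝔟).mpr hp𝔟, smul_zero, sub_zero]
      rw [hmkq]
      have hq' : q ∈ Submodule.span k ((fun y => MonoidAlgebra.single y (1:k)) '' ↑q.coeff.support) := by
        rw [← MonoidAlgebra.supported_eq_span_single]
        exact MonoidAlgebra.mem_supported.2 subset_rfl
      have hmap := Submodule.mem_map_of_mem (f := 𝔟.mkQ) hq'
      rw [Submodule.map_span] at hmap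
      refine Submodule.span_le.mpr ?_ hmap
      rintro _ ⟨_, ⟨y, hy, rfl⟩, rfl⟩
      exact IH y (hsupp y hy).1 (hsupp y hy).2
  apply le_antisymm
  · rw [hS, Submodule.span_le]
    rintro _ ⟨⟨u, hu, hdeg⟩, rfl⟩
    refine Submodule.mem_map_of_mem ?_
    rw [NC2.wsupported, MonoidAlgebra.mem_supported, mono_eq_single,
      MonoidAlgebra.coeff_single, Finsupp.support_single_ne_zero _ (one_ne_zero (α := k))]
    simpa using hdeg
  · intro y hy
    obtain ⟨g, hg, rfl⟩ := hy
    rw [NC2.wsupported] at hg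
    have hg' : g ∈ Submodule.span k
        ((fun u => MonoidAlgebra.single u (1:k)) '' {u | NC2.mdeg e u = β}) := by
      rw [← MonoidAlgebra.supported_eq_span_single]; exact hg
    have hmap := Submodule.mem_map_of_mem (f := 𝔟.mkQ) hg'
    rw [Submodule.map_span] at hmap
    refine Submodule.span_le.mpr ?_ hmap
    rintro _ ⟨_, ⟨u, hu, rfl⟩, rfl⟩
    exact key u hu

end Aux

namespace Aux
open NC NC2
variable {k X : Type} [Field k]

lemma finite_mdeg_eq [Finite X] {s : ℕ} (e : X → Fin s → ℕ) (he : ∀ x, e x ≠ 0)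
    (β : Fin s → ℕ) : {u : FreeMonoid X | NC2.mdeg e u = β}.Finite := by
  have hlen : ∀ l : List X, l.length ≤ ∑ i, (l.map e).sum i := by
    intro l
    induction l with
    | nil => simp
    | cons a t ih =>
        have hx : 1 ≤ ∑ i, e a i := by
          rcases Function.ne_iff.mp (he a) with ⟨i, hi⟩
          calc 1 ≤ e a i := Nat.one_le_iff_ne_zero.mpr hi
            _ ≤ ∑ i, e a i := Finset.single_le_sum (fun _ _ => Nat.zero_le _) (Finset.mem_univ i)
        simp only [List.map_cons, List.sum_cons, List.length_cons, Pi.add_apply]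
        rw [Finset.sum_add_distrib]
        omega
  have hsub : {u : FreeMonoid X | NC2.mdeg e u = β} ⊆
      FreeMonoid.toList ⁻¹' {l : List X | l.length ≤ ∑ i, β i} := by
    intro u hu
    simp only [Set.mem_preimage, Set.mem_setOf_eq]
    calc (FreeMonoid.toList u).length ≤ ∑ i, ((FreeMonoid.toList u).map e).sum i :=
          hlen (FreeMonoid.toList u)
      _ = ∑ i, β i := by
          refine Finset.sum_congr rfl fun i _ => ?_
          have : NC2.mdeg e u = β := hu
          rw [show ((FreeMonoid.toList u).map e).sum = NC2.mdeg e u from rfl, this]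
  exact ((List.finite_length_le X (∑ i, β i)).preimage
    FreeMonoid.toList.injective.injOn).subset hsub

variable [LinearOrder (FreeMonoid X)]

lemma li_R (G : Set (NC.FA k X)) {s : ℕ} (e : X → Fin s → ℕ) (β : Fin s → ℕ) :
    LinearIndependent k
      (fun u : {u : FreeMonoid X // u ∈ NC.nw G ∧ NC2.mdeg e u = β} =>
        (NC2.monIdeal k (NC.lwSet G)).mkQ (NC.mono k u.1)) := by
  classical
  have h1 : LinearIndependent k
      (fun u : {u : FreeMonoid X // u ∈ NC.nw G ∧ NC2.mdeg e u = β} => NC.mono k u.1) := by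
    have hb := (MonoidAlgebra.basis (FreeMonoid X) k).linearIndependent
    have h2 := hb.comp (fun u : {u : FreeMonoid X // u ∈ NC.nw G ∧ NC2.mdeg e u = β} => u.1)
      Subtype.val_injective
    have heq : (⇑(MonoidAlgebra.basis (FreeMonoid X) k) ∘
        fun u : {u : FreeMonoid X // u ∈ NC.nw G ∧ NC2.mdeg e u = β} => u.1) =
        fun u : {u : FreeMonoid X // u ∈ NC.nw G ∧ NC2.mdeg e u = β} => NC.mono k u.1 := by
      funext u
      simp [MonoidAlgebra.basis_apply, mono_eq_single, Function.comp]
    rwa [heq] at h2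
  have hdisj : Disjoint
      (Submodule.span k (Set.range
        (fun u : {u : FreeMonoid X // u ∈ NC.nw G ∧ NC2.mdeg e u = β} => NC.mono k u.1)))
      (LinearMap.ker (NC2.monIdeal k (NC.lwSet G)).mkQ) := by
    rw [Submodule.ker_mkQ]
    have hle1 : Submodule.span k (Set.range
        (fun u : {u : FreeMonoid X // u ∈ NC.nw G ∧ NC2.mdeg e u = β} => NC.mono k u.1))
        ≤ NC2.wsupported k {u | u ∈ NC.nw G} := by
      rw [Submodule.span_le]
      rintro _ ⟨u, rfl⟩
      rw [SetLike.mem_coe, NC2.wsupported, MonoidAlgebra.mem_supported]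
      show ↑(NC.mono k u.1).coeff.support ⊆ {u | u ∈ NC.nw G}
      rw [mono_eq_single, MonoidAlgebra.coeff_single, Finsupp.support_single_ne_zero _ (one_ne_zero (α := k))]
      simpa using u.2.1
    have hdd : Disjoint (NC2.wsupported k {u | u ∈ NC.nw G}) (NC2.wsupported k {u | u ∈ NC.nw G}ᶜ) := by
      rw [Submodule.disjoint_def]
      intro x hx1 hx2
      exact MonoidAlgebra.coeff_eq_zero.mp (Submodule.disjoint_def.mp
        (Finsupp.disjoint_supported_supported (M := k) (R := k) disjoint_compl_right) x.coeff hx1 hx2)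
    exact hdd.mono hle1 (monIdeal_le G)
  exact h1.map hdisj

end Aux

/-- for a homogeneous set `G ⊆ 𝔞` and `R = k⟨X⟩/(lw(G))`, and any
`α ∈ ℕ^s`: the images of the normal words of degree `β` modulo `G` form a `k`-basis of
`A_β` for every `β ≤ α` if and only if `dim_k A_β = dim_k R_β` for every `β ≤ α`. -/
theorem stmt_2 (k X : Type) [Field k] [Finite X] [LinearOrder (FreeMonoid X)]
    (hadm : NC.IsAdmissible X) (s : ℕ) (e : X → Fin s → ℕ) (he : ∀ x, e x ≠ 0)
    (𝔞 : Submodule k (NC.FA k X)) (hh : NC2.IsHomogIdeal e 𝔞)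
    (G : Set (NC.FA k X)) (hGsub : ∀ g ∈ G, g ∈ 𝔞)
    (hGhom : ∀ g ∈ G, ∃ α, NC2.IsHomog e α g)
    (α : Fin s → ℕ) :
    (∀ β ≤ α,
        LinearIndependent k
          (fun u : {u : FreeMonoid X // u ∈ NC.nw G ∧ NC2.mdeg e u = β} =>
            𝔞.mkQ (NC.mono k u.1)) ∧
        Submodule.span k
            (Set.range (fun u : {u : FreeMonoid X // u ∈ NC.nw G ∧ NC2.mdeg e u = β} =>
              𝔞.mkQ (NC.mono k u.1))) =
          (NC2.wsupported k {u | NC2.mdeg e u = β}).map 𝔞.mkQ) ↔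
    (∀ β ≤ α, NC2.hilb e 𝔞 β = NC2.hilb e (NC2.monIdeal k (NC.lwSet G)) β) := by
  classical
  have hrepA : ∀ v ∈ NC.lwSet G, ∃ f ∈ 𝔞, f ≠ 0 ∧ NC.lw f = v ∧
      NC2.IsHomog e (NC2.mdeg e v) f := by
    rintro v ⟨g, hgG, hg0, rfl⟩
    obtain ⟨γ, hγ⟩ := hGhom g hgG
    have hγ' : γ = NC2.mdeg e (NC.lw g) := (hγ _ (Aux.lw_mem_support hg0)).symm
    exact ⟨g, hGsub g hgG, hg0, rfl, hγ' ▸ hγ⟩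
  have hrepR : ∀ v ∈ NC.lwSet G, ∃ f ∈ NC2.monIdeal k (NC.lwSet G), f ≠ 0 ∧ NC.lw f = v ∧
      NC2.IsHomog e (NC2.mdeg e v) f := by
    intro v hv
    refine ⟨NC.mono k v, ?_, ?_, Aux.lw_mono v, ?_⟩
    · exact Submodule.subset_span ⟨1, NC.mono k v, 1, ⟨v, hv, rfl⟩, by simp⟩
    · rw [Aux.mono_eq_single]
      exact fun h => one_ne_zero (MonoidAlgebra.single_eq_zero.mp h)
    · intro u hu
      rw [Aux.mono_eq_single, MonoidAlgebra.coeff_single, Finsupp.support_single_ne_zero _ (one_ne_zero (α := k)),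
        Finset.mem_singleton] at hu
      subst hu; rfl
  have spanA := fun β => Aux.span_normal hadm e G 𝔞 hh.1 hrepA β
  have spanR := fun β => Aux.span_normal hadm e G (NC2.monIdeal k (NC.lwSet G))
    (Aux.isTwoSided_ideal2 _) hrepR β
  have hfin : ∀ β : Fin s → ℕ, {u : FreeMonoid X | u ∈ NC.nw G ∧ NC2.mdeg e u = β}.Finite :=
    fun β => (Aux.finite_mdeg_eq e he β).subset (fun u hu => hu.2)
  constructor
  · intro h β hβ
    haveI : Fintype {u : FreeMonoid X // u ∈ NC.nw G ∧ NC2.mdeg e u = β} := (hfin β).fintype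
    obtain ⟨hli, hsp⟩ := h β hβ
    rw [NC2.hilb, NC2.hilb, NC2.hilbS, NC2.hilbS, ← hsp, ← spanR β,
      finrank_span_eq_card hli, finrank_span_eq_card (Aux.li_R G e β)]
  · intro h β hβ
    haveI : Fintype {u : FreeMonoid X // u ∈ NC.nw G ∧ NC2.mdeg e u = β} := (hfin β).fintype
    refine ⟨?_, spanA β⟩
    rw [linearIndependent_iff_card_eq_finrank_span, Set.finrank, spanA β]
    have h1 : NC2.hilb e 𝔞 β =
        Module.finrank k ↥((NC2.wsupported k {u | NC2.mdeg e u = β}).map 𝔞.mkQ) := rfl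
    rw [← h1, h β hβ, NC2.hilb, NC2.hilbS, ← spanR β]
    exact (finrank_span_eq_card (Aux.li_R G e β)).symm
end
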